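/- For a random walk Z_t and an independent geometric time G, the running maximum Z̄_G = max_{0≤n≤G} Z_n and the quantity Z_G − Z̄_G are independent, and Z_G − Z̄_G has the same distribution as the running minimum Z_G := min_{0≤n≤G} Z_n. Consequently E[w^{Z_G}] = E[w^{Z̄_G}]·E[w^{min_{0≤n≤G} Z_n}]. -/

import Mathlib

open MeasureTheory ProbabilityTheory Filter Set
open scoped ENNReal NNReal

namespace WHaux

/-- prefix sum of a list -/
def PS (l : List ℤ) (n : ℕ) : ℤ := (l.take n).sum

@[simp] lemma PS_zero (l : List ℤ) : PS l 0 = 0 := by simp [PS]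

@[simp] lemma PS_length (l : List ℤ) : PS l l.length = l.sum := by
  simp [PS]

lemma PS_of_le {l : List ℤ} {n : ℕ} (h : l.length ≤ n) : PS l n = l.sum := by
  simp [PS, List.take_of_length_le h]

lemma PS_append_le {b c : List ℤ} {n : ℕ} (h : n ≤ b.length) :
    PS (b ++ c) n = PS b n := by
  simp [PS, List.take_append_of_le_length h]

lemma PS_append_add (b c : List ℤ) (n : ℕ) :
    PS (b ++ c) (b.length + n) = b.sum + PS c n := by
  simp [PS, List.take_append, List.take_of_length_le (Nat.le_add_right b.length n)]

lemma PS_take {l : List ℤ} {k n : ℕ} (h : n ≤ k) : PS (l.take k) n = PS l n := by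
  simp [PS, List.take_take, Nat.min_eq_left h]

lemma PS_drop {l : List ℤ} {k : ℕ} (h : k ≤ l.length) (n : ℕ) :
    PS (l.drop k) n = PS l (k + n) - PS l k := by
  have hb : (l.take k).length = k := by
    simp [List.length_take, Nat.min_eq_left h]
  have h2 := PS_append_add (l.take k) (l.drop k) n
  rw [List.take_append_drop, hb] at h2
  have h3 : (l.take k).sum = PS l k := rfl
  omega

lemma PS_reverse (l : List ℤ) (n : ℕ) :
    PS l.reverse n = l.sum - PS l (l.length - n) := by
  have h1 : (l.reverse.take n).reverse = l.drop (l.length - n) := by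
    have := @List.reverse_take ℤ l.reverse n
    rwa [List.reverse_reverse, List.length_reverse] at this
  have h2 : (l.reverse.take n).sum = (l.drop (l.length - n)).sum := by
    rw [← h1, List.sum_reverse]
  have h3 := List.sum_take_add_sum_drop l (l.length - n)
  have h4 : (l.take (l.length - n)).sum = PS l (l.length - n) := rfl
  have h5 : (l.reverse.take n).sum = PS l.reverse n := rfl
  omega

/-- running maximum of prefix sums -/
def maxPS (l : List ℤ) : ℤ :=
  (Finset.range (l.length + 1)).sup'
    (Finset.nonempty_range_iff.mpr (Nat.succ_ne_zero _)) (PS l)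

/-- running minimum of prefix sums -/
def minPS (l : List ℤ) : ℤ :=
  (Finset.range (l.length + 1)).inf'
    (Finset.nonempty_range_iff.mpr (Nat.succ_ne_zero _)) (PS l)

lemma le_maxPS {l : List ℤ} {n : ℕ} (h : n ≤ l.length) : PS l n ≤ maxPS l :=
  Finset.le_sup' _ (Finset.mem_range.mpr (by omega))

lemma maxPS_le {l : List ℤ} {x : ℤ} (h : ∀ n ≤ l.length, PS l n ≤ x) : maxPS l ≤ x :=
  Finset.sup'_le _ _ fun n hn => h n (by simpa using Nat.lt_succ_iff.mp (Finset.mem_range.mp hn))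

lemma exists_maxPS (l : List ℤ) : ∃ n ≤ l.length, PS l n = maxPS l := by
  obtain ⟨n, hn, h⟩ := Finset.exists_mem_eq_sup'
    (Finset.nonempty_range_iff.mpr (Nat.succ_ne_zero l.length)) (PS l)
  exact ⟨n, Nat.lt_succ_iff.mp (Finset.mem_range.mp hn), h.symm⟩

lemma minPS_le {l : List ℤ} {n : ℕ} (h : n ≤ l.length) : minPS l ≤ PS l n :=
  Finset.inf'_le _ (Finset.mem_range.mpr (by omega))

lemma le_minPS {l : List ℤ} {y : ℤ} (h : ∀ n ≤ l.length, y ≤ PS l n) : y ≤ minPS l :=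
  Finset.le_inf' _ _ fun n hn => h n (by simpa using Nat.lt_succ_iff.mp (Finset.mem_range.mp hn))

lemma exists_minPS (l : List ℤ) : ∃ n ≤ l.length, PS l n = minPS l := by
  obtain ⟨n, hn, h⟩ := Finset.exists_mem_eq_inf'
    (Finset.nonempty_range_iff.mpr (Nat.succ_ne_zero l.length)) (PS l)
  exact ⟨n, Nat.lt_succ_iff.mp (Finset.mem_range.mp hn), h.symm⟩

/-- strict ascending ladder: maximum attained only at the end -/
def Lad (x : ℤ) (b : List ℤ) : Prop := b.sum = x ∧ ∀ j < b.length, PS b j < x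

/-- strict descending ladder -/
def DLad (y : ℤ) (b : List ℤ) : Prop := b.sum = y ∧ ∀ j < b.length, y < PS b j

/-- walk stays nonpositive, ends at y -/
def NegP (y : ℤ) (c : List ℤ) : Prop := c.sum = y ∧ ∀ j, PS c j ≤ 0

/-- walk stays nonnegative -/
def PosP (c : List ℤ) : Prop := ∀ j, 0 ≤ PS c j

/-- walk stays nonnegative and ends at 0 -/
def Pos0 (c : List ℤ) : Prop := (∀ j, 0 ≤ PS c j) ∧ c.sum = 0

/-- final value is the (weak) minimum, equal to y -/
def MinAt (y : ℤ) (c : List ℤ) : Prop := c.sum = y ∧ ∀ j, y ≤ PS c j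


lemma append_inj_of_ne {x : ℤ} {b c b' c' : List ℤ}
    (h1 : b.sum = x) (h1' : b'.sum = x)
    (h2 : ∀ j < b.length, PS b j ≠ x) (h2' : ∀ j < b'.length, PS b' j ≠ x)
    (h : b ++ c = b' ++ c') : b = b' ∧ c = c' := by
  have hlen : b.length = b'.length := by
    rcases Nat.lt_trichotomy b.length b'.length with hlt | heq | hgt
    · exfalso
      have e1 : PS (b' ++ c') b.length = PS b' b.length := PS_append_le (le_of_lt hlt)
      have e2 : PS (b ++ c) b.length = PS b b.length := PS_append_le le_rfl
      rw [h, e1] at e2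
      have : PS b b.length = x := by rw [PS_length]; exact h1
      exact h2' _ hlt (by omega)
    · exact heq
    · exfalso
      have e1 : PS (b ++ c) b'.length = PS b b'.length := PS_append_le (le_of_lt hgt)
      have e2 : PS (b' ++ c') b'.length = PS b' b'.length := PS_append_le le_rfl
      rw [← h, e1] at e2
      have : PS b' b'.length = x := by rw [PS_length]; exact h1'
      exact h2 _ hgt (by omega)
  exact List.append_inj h hlen

lemma lad_append_inj {x : ℤ} {b c b' c' : List ℤ}
    (hb : Lad x b) (hb' : Lad x b') (h : b ++ c = b' ++ c') : b = b' ∧ c = c' :=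
  append_inj_of_ne hb.1 hb'.1 (fun j hj => ne_of_lt (hb.2 j hj))
    (fun j hj => ne_of_lt (hb'.2 j hj)) h

lemma dlad_append_inj {y : ℤ} {b c b' c' : List ℤ}
    (hb : DLad y b) (hb' : DLad y b') (h : b ++ c = b' ++ c') : b = b' ∧ c = c' :=
  append_inj_of_ne hb.1 hb'.1 (fun j hj => ne_of_gt (hb.2 j hj))
    (fun j hj => ne_of_gt (hb'.2 j hj)) h

lemma max_decomp (x y : ℤ) (l : List ℤ) :
    (maxPS l = x ∧ l.sum - maxPS l = y) ↔ ∃ b c, Lad x b ∧ NegP y c ∧ l = b ++ c := by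
  constructor
  · rintro ⟨hx, hy⟩
    have hex : ∃ n, n ≤ l.length ∧ PS l n = x := by
      obtain ⟨n, hn, h⟩ := exists_maxPS l
      exact ⟨n, hn, by rw [h, hx]⟩
    classical
    obtain ⟨k, ⟨hkle, hkx⟩, hmin'⟩ : ∃ k, (k ≤ l.length ∧ PS l k = x) ∧
        ∀ j < k, ¬(j ≤ l.length ∧ PS l j = x) :=
      ⟨Nat.find hex, Nat.find_spec hex, fun j hj => Nat.find_min hex hj⟩
    have hmin : ∀ j < k, j ≤ l.length → PS l j ≠ x := by
      intro j hj hjle hje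
      exact hmin' j hj ⟨hjle, hje⟩
    refine ⟨l.take k, l.drop k, ⟨?_, ?_⟩, ⟨?_, ?_⟩, (List.take_append_drop k l).symm⟩
    · have : (l.take k).sum = PS l k := rfl
      rw [this, hkx]
    · intro j hj
      have hlen : (l.take k).length = k := by simp [List.length_take, Nat.min_eq_left hkle]
      rw [hlen] at hj
      rw [PS_take (le_of_lt hj)]
      have h1 : PS l j ≤ x := by rw [← hx]; exact le_maxPS (by omega)
      have h2 : PS l j ≠ x := hmin j hj (by omega)
      omega
    · have hlen : (l.drop k).length = l.length - k := by simp
      have : (l.drop k).sum = PS (l.drop k) (l.length - k) := by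
        rw [← hlen, PS_length]
      rw [this, PS_drop hkle, hkx]
      have : k + (l.length - k) = l.length := by omega
      rw [this, PS_length]
      omega
    · intro j
      rw [PS_drop hkle, hkx]
      rcases le_or_gt (k + j) l.length with hle | hgt
      · have := le_maxPS (l := l) hle
        omega
      · have h1 : PS l (k + j) = l.sum := PS_of_le (by omega)
        have h2 : PS l l.length ≤ maxPS l := le_maxPS le_rfl
        rw [PS_length] at h2
        omega
  · rintro ⟨b, c, ⟨hbs, hbl⟩, ⟨hcs, hcl⟩, rfl⟩
    have hmax : maxPS (b ++ c) = x := by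
      apply le_antisymm
      · apply maxPS_le
        intro n _
        rcases le_or_gt n b.length with hle | hgt
        · rw [PS_append_le hle]
          rcases eq_or_lt_of_le hle with heq | hlt
          · subst heq; rw [PS_length]; omega
          · exact le_of_lt (hbl n hlt)
        · have : n = b.length + (n - b.length) := by omega
          rw [this, PS_append_add]
          have := hcl (n - b.length)
          omega
      · have h1 : PS (b ++ c) b.length = x := by
          rw [PS_append_le le_rfl, PS_length]; exact hbs
        rw [← h1]
        exact le_maxPS (by simp)
    refine ⟨hmax, ?_⟩
    rw [hmax, List.sum_append]
    omega

lemma min_decomp (y : ℤ) (l : List ℤ) :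
    minPS l = y ↔ ∃ b c, DLad y b ∧ PosP c ∧ l = b ++ c := by
  constructor
  · intro hy
    have hex : ∃ n, n ≤ l.length ∧ PS l n = y := by
      obtain ⟨n, hn, h⟩ := exists_minPS l
      exact ⟨n, hn, by rw [h, hy]⟩
    classical
    obtain ⟨k, ⟨hkle, hky⟩, hmin'⟩ : ∃ k, (k ≤ l.length ∧ PS l k = y) ∧
        ∀ j < k, ¬(j ≤ l.length ∧ PS l j = y) :=
      ⟨Nat.find hex, Nat.find_spec hex, fun j hj => Nat.find_min hex hj⟩
    have hmin : ∀ j < k, j ≤ l.length → PS l j ≠ y := by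
      intro j hj hjle hje
      exact hmin' j hj ⟨hjle, hje⟩
    refine ⟨l.take k, l.drop k, ⟨?_, ?_⟩, ?_, (List.take_append_drop k l).symm⟩
    · have : (l.take k).sum = PS l k := rfl
      rw [this, hky]
    · intro j hj
      have hlen : (l.take k).length = k := by simp [List.length_take, Nat.min_eq_left hkle]
      rw [hlen] at hj
      rw [PS_take (le_of_lt hj)]
      have h1 : y ≤ PS l j := by rw [← hy]; exact minPS_le (by omega)
      have h2 : PS l j ≠ y := hmin j hj (by omega)
      omega
    · intro j
      rw [PS_drop hkle, hky]
      rcases le_or_gt (k + j) l.length with hle | hgt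
      · have := minPS_le (l := l) hle
        omega
      · have h1 : PS l (k + j) = l.sum := PS_of_le (by omega)
        have h2 : minPS l ≤ PS l l.length := minPS_le le_rfl
        rw [PS_length] at h2
        omega
  · rintro ⟨b, c, ⟨hbs, hbl⟩, hcl, rfl⟩
    apply le_antisymm
    · have h1 : PS (b ++ c) b.length = y := by
        rw [PS_append_le le_rfl, PS_length]; exact hbs
      rw [← h1]
      exact minPS_le (by simp)
    · apply le_minPS
      intro n _
      rcases le_or_gt n b.length with hle | hgt
      · rw [PS_append_le hle]
        rcases eq_or_lt_of_le hle with heq | hlt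
        · subst heq; rw [PS_length]; omega
        · exact le_of_lt (hbl n hlt)
      · have : n = b.length + (n - b.length) := by omega
        rw [this, PS_append_add]
        have := hcl (n - b.length)
        omega

lemma minAt_decomp (y : ℤ) (l : List ℤ) :
    MinAt y l ↔ ∃ b c, DLad y b ∧ Pos0 c ∧ l = b ++ c := by
  constructor
  · rintro ⟨hsum, hall⟩
    have hex : ∃ n, n ≤ l.length ∧ PS l n = y := ⟨l.length, le_rfl, by rw [PS_length]; exact hsum⟩
    classical
    obtain ⟨k, ⟨hkle, hky⟩, hmin'⟩ : ∃ k, (k ≤ l.length ∧ PS l k = y) ∧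
        ∀ j < k, ¬(j ≤ l.length ∧ PS l j = y) :=
      ⟨Nat.find hex, Nat.find_spec hex, fun j hj => Nat.find_min hex hj⟩
    have hmin : ∀ j < k, j ≤ l.length → PS l j ≠ y := by
      intro j hj hjle hje
      exact hmin' j hj ⟨hjle, hje⟩
    refine ⟨l.take k, l.drop k, ⟨?_, ?_⟩, ⟨?_, ?_⟩, (List.take_append_drop k l).symm⟩
    · have : (l.take k).sum = PS l k := rfl
      rw [this, hky]
    · intro j hj
      have hlen : (l.take k).length = k := by simp [List.length_take, Nat.min_eq_left hkle]
      rw [hlen] at hj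
      rw [PS_take (le_of_lt hj)]
      have h1 : y ≤ PS l j := hall j
      have h2 : PS l j ≠ y := hmin j hj (by omega)
      omega
    · intro j
      rw [PS_drop hkle, hky]
      have := hall (k + j)
      omega
    · have hlen : (l.drop k).length = l.length - k := by simp
      have : (l.drop k).sum = PS (l.drop k) (l.length - k) := by
        rw [← hlen, PS_length]
      rw [this, PS_drop hkle, hky]
      have : k + (l.length - k) = l.length := by omega
      rw [this, PS_length]
      omega
  · rintro ⟨b, c, ⟨hbs, hbl⟩, ⟨hcl, hcs⟩, rfl⟩
    constructor
    · rw [List.sum_append]; omega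
    · intro j
      rcases le_or_gt j b.length with hle | hgt
      · rw [PS_append_le hle]
        rcases eq_or_lt_of_le hle with heq | hlt
        · subst heq; rw [PS_length]; omega
        · exact le_of_lt (hbl j hlt)
      · have : j = b.length + (j - b.length) := by omega
        rw [this, PS_append_add]
        have := hcl (j - b.length)
        omega

lemma neg_iff_minAt_reverse (y : ℤ) (c : List ℤ) :
    NegP y c ↔ MinAt y c.reverse := by
  constructor
  · rintro ⟨hsum, hall⟩
    refine ⟨by rw [List.sum_reverse]; exact hsum, ?_⟩
    intro j
    rw [PS_reverse]
    have := hall (c.length - j)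
    omega
  · rintro ⟨hsum, hall⟩
    rw [List.sum_reverse] at hsum
    refine ⟨hsum, ?_⟩
    intro j
    rcases le_or_gt j c.length with hle | hgt
    · have := hall (c.length - j)
      rw [PS_reverse] at this
      have hj : c.length - (c.length - j) = j := by omega
      rw [hj] at this
      omega
    · rw [PS_of_le (by omega)]
      have := hall 0
      rw [PS_zero] at this
      omega


open scoped Classical

lemma tsum_ite_split (Q A B : List ℤ → Prop) (F F₁ F₂ : List ℤ → ℝ≥0∞)
    (hmul : ∀ b c, F (b ++ c) = F₁ b * F₂ c)
    (hiff : ∀ l, Q l ↔ ∃ b c, A b ∧ B c ∧ l = b ++ c)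
    (hinj : ∀ b c b' c', A b → B c → A b' → B c' → b ++ c = b' ++ c' → b = b' ∧ c = c') :
    ∑' l : List ℤ, (if Q l then F l else 0)
      = (∑' b : List ℤ, if A b then F₁ b else 0) * ∑' c : List ℤ, if B c then F₂ c else 0 := by
  set S : Set (List ℤ × List ℤ) := {p | A p.1 ∧ B p.2} with hS
  have hg : ∀ p : List ℤ × List ℤ,
      (if A p.1 then F₁ p.1 else 0) * (if B p.2 then F₂ p.2 else 0)
        = if A p.1 ∧ B p.2 then F (p.1 ++ p.2) else 0 := by
    intro p
    by_cases hA : A p.1 <;> by_cases hB : B p.2 <;> simp [hA, hB, hmul]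
  have step1 : (∑' b : List ℤ, if A b then F₁ b else 0) * (∑' c : List ℤ, if B c then F₂ c else 0)
      = ∑' p : List ℤ × List ℤ, (if A p.1 ∧ B p.2 then F (p.1 ++ p.2) else 0) := by
    rw [ENNReal.tsum_prod']
    rw [← ENNReal.tsum_mul_right]
    congr 1
    ext b
    rw [← ENNReal.tsum_mul_left]
    congr 1
    ext c
    exact hg (b, c)
  rw [step1]
  -- restrict to the subtype S
  have step2 : ∑' p : List ℤ × List ℤ, (if A p.1 ∧ B p.2 then F (p.1 ++ p.2) else 0)
      = ∑' p : S, F (p.1.1 ++ p.1.2) := by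
    rw [← tsum_subtype_eq_of_support_subset (s := S) (by
      intro p hp
      by_contra hpS
      apply hp
      simp only [Function.mem_support] at *
      rw [if_neg (by exact fun h => hpS h)] )]
    apply tsum_congr
    intro p
    exact if_pos p.2
  rw [step2]
  -- now the injection into List ℤ
  have einj : Function.Injective (fun p : S => p.1.1 ++ p.1.2) := by
    rintro ⟨⟨b, c⟩, hb, hc⟩ ⟨⟨b', c'⟩, hb', hc'⟩ h
    simp only at h
    obtain ⟨h1, h2⟩ := hinj b c b' c' hb hc hb' hc' h
    simp [h1, h2]
  have := einj.tsum_eq (f := fun l => if Q l then F l else 0) (by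
    intro l hl
    simp only [Function.mem_support, ne_eq, ite_eq_right_iff, not_forall] at hl
    obtain ⟨hQ, -⟩ := hl
    obtain ⟨b, c, hA, hB, rfl⟩ := (hiff l).mp hQ
    exact ⟨⟨(b, c), hA, hB⟩, rfl⟩)
  rw [← this]
  apply tsum_congr
  rintro ⟨⟨b, c⟩, hb, hc⟩
  simp only
  rw [if_pos ((hiff _).mpr ⟨b, c, hb, hc, rfl⟩)]

lemma tsum_ite_reverse (P P' : List ℤ → Prop) (F : List ℤ → ℝ≥0∞)
    (hFrev : ∀ c, F c.reverse = F c)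
    (hrev : ∀ c, P c ↔ P' c.reverse) :
    ∑' c : List ℤ, (if P c then F c else 0) = ∑' c : List ℤ, if P' c then F c else 0 := by
  rw [← Equiv.tsum_eq
    (⟨List.reverse, List.reverse, List.reverse_reverse, List.reverse_reverse⟩ : List ℤ ≃ List ℤ)
    (fun c => if P' c then F c else 0)]
  apply tsum_congr
  intro c
  simp only [Equiv.coe_fn_mk]
  rw [hFrev]
  by_cases h : P c
  · rw [if_pos ((hrev c).mp h), if_pos h]
  · rw [if_neg (fun hc => h ((hrev c).mpr hc)), if_neg h]

end WHaux

/-- Position at time `t` of the random walk with increments `ξ`. -/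
def walkPos {Ω : Type*} (ξ : ℕ → Ω → ℤ) (t : ℕ) (ω : Ω) : ℤ :=
  ∑ i ∈ Finset.range t, ξ i ω

/-- Running maximum of the walk up to time `T`. -/
def runMax {Ω : Type*} (ξ : ℕ → Ω → ℤ) (T : ℕ) (ω : Ω) : ℤ :=
  Finset.sup' (Finset.range (T + 1))
    (Finset.nonempty_range_iff.mpr (Nat.succ_ne_zero T)) (fun n => walkPos ξ n ω)

/-- Running minimum of the walk up to time `T`. -/
def runMin {Ω : Type*} (ξ : ℕ → Ω → ℤ) (T : ℕ) (ω : Ω) : ℤ :=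
  Finset.inf' (Finset.range (T + 1))
    (Finset.nonempty_range_iff.mpr (Nat.succ_ne_zero T)) (fun n => walkPos ξ n ω)

namespace WHaux

variable {Ω : Type*} [MeasurableSpace Ω]

/-- the observed increments up to time `t`, as a list -/
def obsL (ξ : ℕ → Ω → ℤ) (t : ℕ) (ω : Ω) : List ℤ := List.ofFn (fun i : Fin t => ξ i ω)

@[simp] lemma obs_length (ξ : ℕ → Ω → ℤ) (t : ℕ) (ω : Ω) : (obsL ξ t ω).length = t :=
  List.length_ofFn

lemma sum_take_getD (l : List ℤ) (n : ℕ) :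
    (l.take n).sum = ∑ i ∈ Finset.range n, l.getD i 0 := by
  induction n with
  | zero => simp
  | succ n ih =>
    rw [List.take_succ, List.sum_append, ih, Finset.sum_range_succ]
    congr 1
    rw [List.getD_eq_getElem?_getD]
    cases l[n]? <;> simp

lemma PS_obs (ξ : ℕ → Ω → ℤ) (t : ℕ) (ω : Ω) {n : ℕ} (hn : n ≤ t) :
    PS (obsL ξ t ω) n = walkPos ξ n ω := by
  rw [PS, sum_take_getD, walkPos]
  apply Finset.sum_congr rfl
  intro i hi
  have hilt : i < t := lt_of_lt_of_le (Finset.mem_range.mp hi) hn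
  have hlen : i < (obsL ξ t ω).length := by simpa using hilt
  rw [List.getD_eq_getElem _ 0 hlen]
  simp [obsL]

lemma sum_obs (ξ : ℕ → Ω → ℤ) (t : ℕ) (ω : Ω) : (obsL ξ t ω).sum = walkPos ξ t ω := by
  have := PS_obs ξ t ω (le_refl t)
  rwa [show PS (obsL ξ t ω) t = (obsL ξ t ω).sum by rw [← PS_length, obs_length]] at this

lemma maxPS_obs (ξ : ℕ → Ω → ℤ) (t : ℕ) (ω : Ω) : maxPS (obsL ξ t ω) = runMax ξ t ω := by
  rw [maxPS, runMax]
  apply Finset.sup'_congr _ (by rw [obs_length])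
  intro n hn
  have : n ≤ t := by
    have := (by simpa using hn : n ≤ t)
    omega
  exact PS_obs ξ t ω this

lemma minPS_obs (ξ : ℕ → Ω → ℤ) (t : ℕ) (ω : Ω) : minPS (obsL ξ t ω) = runMin ξ t ω := by
  rw [minPS, runMin]
  apply Finset.inf'_congr _ (by rw [obs_length])
  intro n hn
  have : n ≤ t := by
    have := (by simpa using hn : n ≤ t)
    omega
  exact PS_obs ξ t ω this

lemma obs_eq_iff (ξ : ℕ → Ω → ℤ) (ω : Ω) (l : List ℤ) :
    obsL ξ l.length ω = l ↔ ∀ i < l.length, ξ i ω = l.getD i 0 := by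
  constructor
  · intro h i hi
    have h2 := congrArg (fun m : List ℤ => m.getD i 0) h
    rw [← h2, List.getD_eq_getElem _ 0 (by simpa using hi)]
    simp [obsL]
  · intro h
    apply List.ext_getElem (by simp)
    intro i h1 h2
    have e1 : (obsL ξ l.length ω)[i] = ξ i ω := by simp [obsL]
    rw [e1, h i h2, List.getD_eq_getElem _ 0 h2]

lemma prod_map_getD (g : ℤ → ℝ≥0∞) (l : List ℤ) :
    (l.map g).prod = ∏ i ∈ Finset.range l.length, g (l.getD i 0) := by
  induction l with
  | nil => simp
  | cons a l ih =>
    rw [List.map_cons, List.prod_cons, ih, List.length_cons, Finset.prod_range_succ']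
    simp [mul_comm]

lemma cylinder_measurable (ξ : ℕ → Ω → ℤ) (hmeas : ∀ i, Measurable (ξ i)) (l : List ℤ) :
    MeasurableSet {ω | obsL ξ l.length ω = l} := by
  have : {ω | obsL ξ l.length ω = l}
      = ⋂ i ∈ Finset.range l.length, ξ i ⁻¹' {l.getD i 0} := by
    ext ω
    simp only [Set.mem_setOf_eq, Set.mem_iInter, Set.mem_preimage, Set.mem_singleton_iff,
      Finset.mem_range]
    exact obs_eq_iff ξ ω l
  rw [this]
  exact MeasurableSet.biInter (Set.to_countable _)
    fun i _ => (hmeas i) (measurableSet_singleton _)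

lemma cylinder_measure (μ : Measure Ω) (ξ : ℕ → Ω → ℤ) (hmeas : ∀ i, Measurable (ξ i))
    (hindep : iIndepFun ξ μ)
    (hident : ∀ i, Measure.map (ξ i) μ = Measure.map (ξ 0) μ) (l : List ℤ) :
    μ {ω | obsL ξ l.length ω = l} = (l.map (fun z => μ (ξ 0 ⁻¹' {z}))).prod := by
  classical
  have hid : ∀ (i : ℕ) (z : ℤ), μ (ξ i ⁻¹' {z}) = μ (ξ 0 ⁻¹' {z}) := by
    intro i z
    have h1 := Measure.map_apply (μ := μ) (hmeas i) (measurableSet_singleton z)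
    have h2 := Measure.map_apply (μ := μ) (hmeas 0) (measurableSet_singleton z)
    rw [← h1, hident i, h2]
  have hseteq : {ω | obsL ξ l.length ω = l}
      = ⋂ i ∈ Finset.range l.length, ξ i ⁻¹' (fun i => ({l.getD i 0} : Set ℤ)) i := by
    ext ω
    simp only [Set.mem_setOf_eq, Set.mem_iInter, Set.mem_preimage, Set.mem_singleton_iff,
      Finset.mem_range]
    exact obs_eq_iff ξ ω l
  rw [hseteq, hindep.measure_inter_preimage_eq_mul (Finset.range l.length)
    (fun i _ => measurableSet_singleton _)]
  rw [prod_map_getD]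
  exact Finset.prod_congr rfl fun i _ => hid i _


variable {Ω : Type*} [MeasurableSpace Ω]

lemma event_eq (ξ : ℕ → Ω → ℤ) (G : Ω → ℕ) (Q : List ℤ → Prop) :
    {ω | Q (obsL ξ (G ω) ω)}
      = ⋃ l : List ℤ, {ω | Q l ∧ G ω = l.length ∧ obsL ξ l.length ω = l} := by
  ext ω
  simp only [Set.mem_setOf_eq, Set.mem_iUnion]
  constructor
  · intro h
    refine ⟨obsL ξ (G ω) ω, h, (obs_length ξ (G ω) ω).symm, ?_⟩
    rw [obs_length]
  · rintro ⟨l, hQ, hG, hobs⟩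
    rw [hG, hobs]
    exact hQ

lemma event_disjoint (ξ : ℕ → Ω → ℤ) (G : Ω → ℕ) (Q : List ℤ → Prop) :
    Pairwise (Function.onFun Disjoint
      (fun l : List ℤ => {ω | Q l ∧ G ω = l.length ∧ obsL ξ l.length ω = l})) := by
  intro l l' hne
  rw [Function.onFun, Set.disjoint_left]
  rintro ω ⟨-, hG, hobs⟩ ⟨-, hG', hobs'⟩
  apply hne
  rw [← hobs, ← hobs', ← hG, ← hG']

lemma event_measurable (ξ : ℕ → Ω → ℤ) (hmeas : ∀ i, Measurable (ξ i))
    (G : Ω → ℕ) (hGmeas : Measurable G) (Q : List ℤ → Prop) (l : List ℤ) :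
    MeasurableSet {ω | Q l ∧ G ω = l.length ∧ obsL ξ l.length ω = l} := by
  classical
  by_cases hQ : Q l
  · have : {ω | Q l ∧ G ω = l.length ∧ obsL ξ l.length ω = l}
        = G ⁻¹' {l.length} ∩ {ω | obsL ξ l.length ω = l} := by
      ext ω; simp [hQ, and_comm]
    rw [this]
    exact (hGmeas (measurableSet_singleton _)).inter (cylinder_measurable ξ hmeas l)
  · have : {ω | Q l ∧ G ω = l.length ∧ obsL ξ l.length ω = l} = ∅ := by
      ext ω; simp [hQ]
    rw [this]
    exact MeasurableSet.empty

lemma master_meas (ξ : ℕ → Ω → ℤ) (hmeas : ∀ i, Measurable (ξ i))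
    (G : Ω → ℕ) (hGmeas : Measurable G) (Q : List ℤ → Prop) :
    MeasurableSet {ω | Q (obsL ξ (G ω) ω)} := by
  rw [event_eq]
  exact MeasurableSet.iUnion fun l => event_measurable ξ hmeas G hGmeas Q l

open scoped Classical in
lemma master (μ : Measure Ω) (f : ℝ) (ξ : ℕ → Ω → ℤ)
    (hmeas : ∀ i, Measurable (ξ i))
    (hindep : iIndepFun ξ μ)
    (hident : ∀ i, Measure.map (ξ i) μ = Measure.map (ξ 0) μ)
    (G : Ω → ℕ) (hGmeas : Measurable G)
    (hGlaw : ∀ t : ℕ, μ {ω | G ω = t} = ENNReal.ofReal ((1 - f) ^ t * f))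
    (hGindep : IndepFun G (fun ω => fun i => ξ i ω) μ)
    (Q : List ℤ → Prop) :
    μ {ω | Q (obsL ξ (G ω) ω)}
      = ∑' l : List ℤ, if Q l then
          ENNReal.ofReal ((1 - f) ^ l.length * f)
            * (l.map (fun z => μ (ξ 0 ⁻¹' {z}))).prod else 0 := by
  classical
  rw [event_eq, measure_iUnion (event_disjoint ξ G Q)
    (event_measurable ξ hmeas G hGmeas Q)]
  apply tsum_congr
  intro l
  by_cases hQ : Q l
  · rw [if_pos hQ]
    have hT : MeasurableSet {u : ℕ → ℤ | ∀ i < l.length, u i = l.getD i 0} := by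
      have : {u : ℕ → ℤ | ∀ i < l.length, u i = l.getD i 0}
          = ⋂ i ∈ Finset.range l.length, (fun u : ℕ → ℤ => u i) ⁻¹' {l.getD i 0} := by
        ext u
        simp [Finset.mem_range]
      rw [this]
      exact MeasurableSet.biInter (Set.to_countable _)
        fun i _ => (measurable_pi_apply i) (measurableSet_singleton _)
    have hEl : {ω | Q l ∧ G ω = l.length ∧ obsL ξ l.length ω = l}
        = G ⁻¹' {l.length}
          ∩ (fun ω => fun i => ξ i ω) ⁻¹' {u : ℕ → ℤ | ∀ i < l.length, u i = l.getD i 0} := by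
      ext ω
      simp only [Set.mem_setOf_eq, Set.mem_inter_iff, Set.mem_preimage,
        Set.mem_singleton_iff, hQ, true_and]
      rw [obs_eq_iff]
    rw [hEl, hGindep.measure_inter_preimage_eq_mul _ _ (measurableSet_singleton _) hT]
    congr 1
    · exact hGlaw l.length
    · rw [← cylinder_measure μ ξ hmeas hindep hident l]
      congr 1
      ext ω
      simp only [Set.mem_preimage, Set.mem_setOf_eq]
      exact (obs_eq_iff ξ ω l).symm
  · rw [if_neg hQ]
    have : {ω | Q l ∧ G ω = l.length ∧ obsL ξ l.length ω = l} = ∅ := by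
      ext ω; simp [hQ]
    rw [this, measure_empty]


open scoped Classical

variable (μ : Measure Ω) (f : ℝ) (ξ : ℕ → Ω → ℤ)

/-- weight of a list of increments -/
noncomputable def wLf (l : List ℤ) : ℝ≥0∞ := (l.map (fun z => μ (ξ 0 ⁻¹' {z}))).prod

noncomputable def FF (l : List ℤ) : ℝ≥0∞ :=
  ENNReal.ofReal ((1 - f) ^ l.length * f) * wLf μ ξ l

noncomputable def F1 (b : List ℤ) : ℝ≥0∞ :=
  ENNReal.ofReal ((1 - f) ^ b.length) * wLf μ ξ b

noncomputable def Lq (x : ℤ) : ℝ≥0∞ := ∑' b : List ℤ, if Lad x b then F1 μ f ξ b else 0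
noncomputable def Nq (y : ℤ) : ℝ≥0∞ := ∑' c : List ℤ, if NegP y c then FF μ f ξ c else 0
noncomputable def Dq (y : ℤ) : ℝ≥0∞ := ∑' b : List ℤ, if DLad y b then F1 μ f ξ b else 0
noncomputable def CPq : ℝ≥0∞ := ∑' c : List ℤ, if PosP c then FF μ f ξ c else 0
noncomputable def C0q : ℝ≥0∞ := ∑' c : List ℤ, if Pos0 c then FF μ f ξ c else 0

lemma FF_mul (hf1 : f ≤ 1) (b c : List ℤ) :
    FF μ f ξ (b ++ c) = F1 μ f ξ b * FF μ f ξ c := by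
  have h1f : (0:ℝ) ≤ 1 - f := by linarith
  rw [FF, F1, FF, wLf, wLf, wLf, List.length_append, List.map_append, List.prod_append]
  rw [pow_add, mul_assoc ((1 - f) ^ b.length) _ f,
    ENNReal.ofReal_mul (pow_nonneg h1f _)]
  ring

lemma FF_rev (c : List ℤ) : FF μ f ξ c.reverse = FF μ f ξ c := by
  rw [FF, FF, wLf, wLf, List.length_reverse, List.map_reverse, List.prod_reverse]

variable {μ f ξ}
variable [IsProbabilityMeasure μ]
variable (hf1 : f ≤ 1)
variable (hmeas : ∀ i, Measurable (ξ i))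
variable (hindep : iIndepFun ξ μ)
variable (hident : ∀ i, Measure.map (ξ i) μ = Measure.map (ξ 0) μ)
variable {G : Ω → ℕ} (hGmeas : Measurable G)
variable (hGlaw : ∀ t : ℕ, μ {ω | G ω = t} = ENNReal.ofReal ((1 - f) ^ t * f))
variable (hGindep : IndepFun G (fun ω => fun i => ξ i ω) μ)

include hf1 hmeas hindep hident hGmeas hGlaw hGindep in
lemma joint_eq (x y : ℤ) :
    μ ((fun ω => runMax ξ (G ω) ω) ⁻¹' {x}
        ∩ (fun ω => walkPos ξ (G ω) ω - runMax ξ (G ω) ω) ⁻¹' {y})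
      = Lq μ f ξ x * Nq μ f ξ y := by
  have hset : (fun ω => runMax ξ (G ω) ω) ⁻¹' {x}
        ∩ (fun ω => walkPos ξ (G ω) ω - runMax ξ (G ω) ω) ⁻¹' {y}
      = {ω | (fun l => maxPS l = x ∧ l.sum - maxPS l = y) (obsL ξ (G ω) ω)} := by
    ext ω
    simp only [Set.mem_inter_iff, Set.mem_preimage, Set.mem_singleton_iff, Set.mem_setOf_eq]
    rw [maxPS_obs, sum_obs]
  rw [hset]
  refine (master μ f ξ hmeas hindep hident G hGmeas hGlaw hGindep
    (fun l => maxPS l = x ∧ l.sum - maxPS l = y)).trans ?_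
  exact tsum_ite_split _ (Lad x) (NegP y) (FF μ f ξ) (F1 μ f ξ) (FF μ f ξ)
    (FF_mul μ f ξ hf1) (max_decomp x y)
    (fun b c b' c' hb _ hb' _ h => lad_append_inj hb hb' h)

include hf1 hmeas hindep hident hGmeas hGlaw hGindep in
lemma min_eq (y : ℤ) :
    μ ((fun ω => runMin ξ (G ω) ω) ⁻¹' {y}) = Dq μ f ξ y * CPq μ f ξ := by
  have hset : (fun ω => runMin ξ (G ω) ω) ⁻¹' {y}
      = {ω | (fun l => minPS l = y) (obsL ξ (G ω) ω)} := by
    ext ω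
    simp only [Set.mem_preimage, Set.mem_singleton_iff, Set.mem_setOf_eq]
    rw [minPS_obs]
  rw [hset]
  refine (master μ f ξ hmeas hindep hident G hGmeas hGlaw hGindep
    (fun l => minPS l = y)).trans ?_
  exact tsum_ite_split _ (DLad y) PosP (FF μ f ξ) (F1 μ f ξ) (FF μ f ξ)
    (FF_mul μ f ξ hf1) (min_decomp y)
    (fun b c b' c' hb _ hb' _ h => dlad_append_inj hb hb' h)

include hf1 in
lemma N_eq (y : ℤ) : Nq μ f ξ y = Dq μ f ξ y * C0q μ f ξ := by
  rw [Nq]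
  rw [tsum_ite_reverse (NegP y) (MinAt y) (FF μ f ξ) (FF_rev μ f ξ) (neg_iff_minAt_reverse y)]
  exact tsum_ite_split _ (DLad y) Pos0 (FF μ f ξ) (F1 μ f ξ) (FF μ f ξ)
    (FF_mul μ f ξ hf1) (minAt_decomp y)
    (fun b c b' c' hb _ hb' _ h => dlad_append_inj hb hb' h)

include hmeas hGmeas in
lemma X_meas : Measurable (fun ω => runMax ξ (G ω) ω) := by
  apply measurable_to_countable'
  intro x
  have : (fun ω => runMax ξ (G ω) ω) ⁻¹' {x}
      = {ω | (fun l => maxPS l = x) (obsL ξ (G ω) ω)} := by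
    ext ω
    simp only [Set.mem_preimage, Set.mem_singleton_iff, Set.mem_setOf_eq]
    rw [maxPS_obs]
  rw [this]
  exact master_meas ξ hmeas G hGmeas (fun l => maxPS l = x)

include hmeas hGmeas in
lemma Y_meas : Measurable (fun ω => walkPos ξ (G ω) ω - runMax ξ (G ω) ω) := by
  apply measurable_to_countable'
  intro y
  have : (fun ω => walkPos ξ (G ω) ω - runMax ξ (G ω) ω) ⁻¹' {y}
      = {ω | (fun l => l.sum - maxPS l = y) (obsL ξ (G ω) ω)} := by
    ext ω
    simp only [Set.mem_preimage, Set.mem_singleton_iff, Set.mem_setOf_eq]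
    rw [maxPS_obs, sum_obs]
  rw [this]
  exact master_meas ξ hmeas G hGmeas (fun l => l.sum - maxPS l = y)

include hmeas hGmeas in
lemma Mn_meas : Measurable (fun ω => runMin ξ (G ω) ω) := by
  apply measurable_to_countable'
  intro y
  have : (fun ω => runMin ξ (G ω) ω) ⁻¹' {y}
      = {ω | (fun l => minPS l = y) (obsL ξ (G ω) ω)} := by
    ext ω
    simp only [Set.mem_preimage, Set.mem_singleton_iff, Set.mem_setOf_eq]
    rw [minPS_obs]
  rw [this]
  exact master_meas ξ hmeas G hGmeas (fun l => minPS l = y)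

lemma meas_partition (ν : Measure Ω) (g : Ω → ℤ) (hg : Measurable g)
    (s : Set Ω) (hs : MeasurableSet s) :
    ν s = ∑' z : ℤ, ν (s ∩ g ⁻¹' {z}) := by
  have hunion : s = ⋃ z : ℤ, s ∩ g ⁻¹' {z} := by
    ext ω
    simp only [Set.mem_iUnion, Set.mem_inter_iff, Set.mem_preimage, Set.mem_singleton_iff]
    exact ⟨fun h => ⟨g ω, h, rfl⟩, fun ⟨z, h, _⟩ => h⟩
  conv_lhs => rw [hunion]
  exact measure_iUnion
    (fun z z' hne => Set.disjoint_left.mpr (by rintro ω ⟨-, rfl⟩ ⟨-, h⟩; exact hne h))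
    (fun z => hs.inter (hg (measurableSet_singleton _)))

end WHaux

/-- Wiener–Hopf factorisation at an independent geometric time.
For a random walk with i.i.d. integer increments and an independent geometric time `G`:
`Z̄_G` and `Z_G − Z̄_G` are independent, `Z_G − Z̄_G` is distributed as the running minimum
`min_{0≤n≤G} Z_n`, and consequently
`E[w^{Z_G}] = E[w^{Z̄_G}]·E[w^{min_{0≤n≤G} Z_n}]`. -/
theorem wiener_hopf_geometric
    {Ω : Type*} [MeasurableSpace Ω] (μ : Measure Ω) [IsProbabilityMeasure μ]
    (f : ℝ) (hf0 : 0 < f) (hf1 : f < 1)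
    (ξ : ℕ → Ω → ℤ)
    (hmeas : ∀ i, Measurable (ξ i))
    (hindep : iIndepFun ξ μ)
    (hident : ∀ i, Measure.map (ξ i) μ = Measure.map (ξ 0) μ)
    (G : Ω → ℕ) (hGmeas : Measurable G)
    (hGlaw : ∀ t : ℕ, μ {ω | G ω = t} = ENNReal.ofReal ((1 - f) ^ t * f))
    (hGindep : IndepFun G (fun ω => fun i => ξ i ω) μ) :
    IndepFun (fun ω => runMax ξ (G ω) ω)
        (fun ω => walkPos ξ (G ω) ω - runMax ξ (G ω) ω) μ ∧
    Measure.map (fun ω => walkPos ξ (G ω) ω - runMax ξ (G ω) ω) μ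
        = Measure.map (fun ω => runMin ξ (G ω) ω) μ ∧
    ∀ w : ℝ, 0 < w →
      ∫⁻ ω, ENNReal.ofReal (w ^ (walkPos ξ (G ω) ω)) ∂μ
        = (∫⁻ ω, ENNReal.ofReal (w ^ (runMax ξ (G ω) ω)) ∂μ)
            * ∫⁻ ω, ENNReal.ofReal (w ^ (runMin ξ (G ω) ω)) ∂μ := by
  classical
  have hf1' : f ≤ 1 := le_of_lt hf1
  have hXm : Measurable (fun ω => runMax ξ (G ω) ω) := WHaux.X_meas hmeas hGmeas
  have hYm : Measurable (fun ω => walkPos ξ (G ω) ω - runMax ξ (G ω) ω) :=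
    WHaux.Y_meas hmeas hGmeas
  have hMm : Measurable (fun ω => runMin ξ (G ω) ω) := WHaux.Mn_meas hmeas hGmeas
  have hJ : ∀ x y : ℤ,
      μ ((fun ω => runMax ξ (G ω) ω) ⁻¹' {x}
          ∩ (fun ω => walkPos ξ (G ω) ω - runMax ξ (G ω) ω) ⁻¹' {y})
        = WHaux.Lq μ f ξ x * WHaux.Nq μ f ξ y :=
    fun x y => WHaux.joint_eq hf1' hmeas hindep hident hGmeas hGlaw hGindep x y
  have hM : ∀ y : ℤ, μ ((fun ω => runMin ξ (G ω) ω) ⁻¹' {y})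
      = WHaux.Dq μ f ξ y * WHaux.CPq μ f ξ :=
    fun y => WHaux.min_eq hf1' hmeas hindep hident hGmeas hGlaw hGindep y
  have hNDC : ∀ y : ℤ, WHaux.Nq μ f ξ y = WHaux.Dq μ f ξ y * WHaux.C0q μ f ξ :=
    fun y => WHaux.N_eq (μ := μ) (ξ := ξ) hf1' y
  have hXx : ∀ x : ℤ, μ ((fun ω => runMax ξ (G ω) ω) ⁻¹' {x})
      = WHaux.Lq μ f ξ x * ∑' y : ℤ, WHaux.Nq μ f ξ y := by
    intro x
    rw [WHaux.meas_partition μ _ hYm _ (hXm (measurableSet_singleton x))]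
    calc ∑' y : ℤ, μ ((fun ω => runMax ξ (G ω) ω) ⁻¹' {x}
          ∩ (fun ω => walkPos ξ (G ω) ω - runMax ξ (G ω) ω) ⁻¹' {y})
        = ∑' y : ℤ, WHaux.Lq μ f ξ x * WHaux.Nq μ f ξ y := tsum_congr fun y => hJ x y
      _ = WHaux.Lq μ f ξ x * ∑' y : ℤ, WHaux.Nq μ f ξ y := ENNReal.tsum_mul_left
  have hYy : ∀ y : ℤ, μ ((fun ω => walkPos ξ (G ω) ω - runMax ξ (G ω) ω) ⁻¹' {y})
      = (∑' x : ℤ, WHaux.Lq μ f ξ x) * WHaux.Nq μ f ξ y := by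
    intro y
    rw [WHaux.meas_partition μ _ hXm _ (hYm (measurableSet_singleton y))]
    calc ∑' x : ℤ, μ ((fun ω => walkPos ξ (G ω) ω - runMax ξ (G ω) ω) ⁻¹' {y}
          ∩ (fun ω => runMax ξ (G ω) ω) ⁻¹' {x})
        = ∑' x : ℤ, WHaux.Lq μ f ξ x * WHaux.Nq μ f ξ y := by
          refine tsum_congr fun x => ?_
          rw [Set.inter_comm]
          exact hJ x y
      _ = (∑' x : ℤ, WHaux.Lq μ f ξ x) * WHaux.Nq μ f ξ y := ENNReal.tsum_mul_right
  have hTot : (∑' x : ℤ, WHaux.Lq μ f ξ x) * (∑' y : ℤ, WHaux.Nq μ f ξ y) = 1 := by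
    have h0 : μ Set.univ = 1 := measure_univ
    rw [WHaux.meas_partition μ _ hXm Set.univ MeasurableSet.univ] at h0
    calc (∑' x : ℤ, WHaux.Lq μ f ξ x) * (∑' y : ℤ, WHaux.Nq μ f ξ y)
        = ∑' x : ℤ, WHaux.Lq μ f ξ x * ∑' y : ℤ, WHaux.Nq μ f ξ y := ENNReal.tsum_mul_right.symm
      _ = ∑' x : ℤ, μ (Set.univ ∩ (fun ω => runMax ξ (G ω) ω) ⁻¹' {x}) := by
          refine tsum_congr fun x => ?_
          rw [Set.univ_inter, hXx x]
      _ = 1 := h0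
  have hTotM : (∑' y : ℤ, WHaux.Dq μ f ξ y) * WHaux.CPq μ f ξ = 1 := by
    have h0 : μ Set.univ = 1 := measure_univ
    rw [WHaux.meas_partition μ _ hMm Set.univ MeasurableSet.univ] at h0
    calc (∑' y : ℤ, WHaux.Dq μ f ξ y) * WHaux.CPq μ f ξ
        = ∑' y : ℤ, WHaux.Dq μ f ξ y * WHaux.CPq μ f ξ := ENNReal.tsum_mul_right.symm
      _ = ∑' y : ℤ, μ (Set.univ ∩ (fun ω => runMin ξ (G ω) ω) ⁻¹' {y}) := by
          refine tsum_congr fun y => ?_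
          rw [Set.univ_inter, hM y]
      _ = 1 := h0
  have hTotY : ((∑' x : ℤ, WHaux.Lq μ f ξ x) * WHaux.C0q μ f ξ)
      * (∑' y : ℤ, WHaux.Dq μ f ξ y) = 1 := by
    have h0 : μ Set.univ = 1 := measure_univ
    rw [WHaux.meas_partition μ _ hYm Set.univ MeasurableSet.univ] at h0
    calc ((∑' x : ℤ, WHaux.Lq μ f ξ x) * WHaux.C0q μ f ξ) * (∑' y : ℤ, WHaux.Dq μ f ξ y)
        = ∑' y : ℤ, ((∑' x : ℤ, WHaux.Lq μ f ξ x) * WHaux.C0q μ f ξ) * WHaux.Dq μ f ξ y :=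
          ENNReal.tsum_mul_left.symm
      _ = ∑' y : ℤ, μ (Set.univ
            ∩ (fun ω => walkPos ξ (G ω) ω - runMax ξ (G ω) ω) ⁻¹' {y}) := by
          refine tsum_congr fun y => ?_
          rw [Set.univ_inter, hYy y, hNDC y]
          ring
      _ = 1 := h0
  have hD0 : (∑' y : ℤ, WHaux.Dq μ f ξ y) ≠ 0 := by
    intro h
    rw [h, zero_mul] at hTotM
    exact zero_ne_one hTotM
  have hDt : (∑' y : ℤ, WHaux.Dq μ f ξ y) ≠ ⊤ := by
    intro h
    rw [h] at hTotM
    rcases eq_or_ne (WHaux.CPq μ f ξ) 0 with h0 | h0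
    · rw [h0, mul_zero] at hTotM
      exact zero_ne_one hTotM
    · rw [ENNReal.top_mul h0] at hTotM
      exact ENNReal.top_ne_one hTotM
  have hLC : (∑' x : ℤ, WHaux.Lq μ f ξ x) * WHaux.C0q μ f ξ = WHaux.CPq μ f ξ := by
    have e1 : ((∑' x : ℤ, WHaux.Lq μ f ξ x) * WHaux.C0q μ f ξ) * (∑' y : ℤ, WHaux.Dq μ f ξ y)
        = WHaux.CPq μ f ξ * (∑' y : ℤ, WHaux.Dq μ f ξ y) := by
      rw [hTotY, mul_comm (WHaux.CPq μ f ξ), hTotM]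
    calc (∑' x : ℤ, WHaux.Lq μ f ξ x) * WHaux.C0q μ f ξ
        = ((∑' x : ℤ, WHaux.Lq μ f ξ x) * WHaux.C0q μ f ξ) * (∑' y : ℤ, WHaux.Dq μ f ξ y)
            * (∑' y : ℤ, WHaux.Dq μ f ξ y)⁻¹ := by
          rw [mul_assoc, ENNReal.mul_inv_cancel hD0 hDt, mul_one]
      _ = WHaux.CPq μ f ξ * (∑' y : ℤ, WHaux.Dq μ f ξ y)
            * (∑' y : ℤ, WHaux.Dq μ f ξ y)⁻¹ := by rw [e1]
      _ = WHaux.CPq μ f ξ := by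
          rw [mul_assoc, ENNReal.mul_inv_cancel hD0 hDt, mul_one]
  have hYMn : ∀ y : ℤ, μ ((fun ω => walkPos ξ (G ω) ω - runMax ξ (G ω) ω) ⁻¹' {y})
      = μ ((fun ω => runMin ξ (G ω) ω) ⁻¹' {y}) := by
    intro y
    rw [hYy y, hM y, hNDC y, ← hLC]
    ring
  have hIndep : IndepFun (fun ω => runMax ξ (G ω) ω)
      (fun ω => walkPos ξ (G ω) ω - runMax ξ (G ω) ω) μ := by
    rw [ProbabilityTheory.indepFun_iff_map_prod_eq_prod_map_map hXm.aemeasurable hYm.aemeasurable]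
    have i1 : IsProbabilityMeasure (μ.map (fun ω => runMax ξ (G ω) ω)) :=
      Measure.isProbabilityMeasure_map hXm.aemeasurable
    have i2 : IsProbabilityMeasure
        (μ.map (fun ω => walkPos ξ (G ω) ω - runMax ξ (G ω) ω)) :=
      Measure.isProbabilityMeasure_map hYm.aemeasurable
    apply MeasureTheory.Measure.ext_of_singleton
    rintro ⟨x, y⟩
    rw [Measure.map_apply (hXm.prodMk hYm) (measurableSet_singleton _)]
    rw [← Set.singleton_prod_singleton, Measure.prod_prod,
      Measure.map_apply hXm (measurableSet_singleton _),
      Measure.map_apply hYm (measurableSet_singleton _)]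
    have hpre : (fun ω => (runMax ξ (G ω) ω, walkPos ξ (G ω) ω - runMax ξ (G ω) ω)) ⁻¹' ({x} ×ˢ {y})
        = (fun ω => runMax ξ (G ω) ω) ⁻¹' {x}
          ∩ (fun ω => walkPos ξ (G ω) ω - runMax ξ (G ω) ω) ⁻¹' {y} := by
      ext ω
      simp [Prod.ext_iff]
    rw [hpre, hJ x y, hXx x, hYy y]
    calc WHaux.Lq μ f ξ x * WHaux.Nq μ f ξ y
        = WHaux.Lq μ f ξ x * WHaux.Nq μ f ξ y * 1 := (mul_one _).symm
      _ = WHaux.Lq μ f ξ x * WHaux.Nq μ f ξ y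
            * ((∑' x : ℤ, WHaux.Lq μ f ξ x) * (∑' y : ℤ, WHaux.Nq μ f ξ y)) := by rw [hTot]
      _ = WHaux.Lq μ f ξ x * (∑' y : ℤ, WHaux.Nq μ f ξ y)
            * ((∑' x : ℤ, WHaux.Lq μ f ξ x) * WHaux.Nq μ f ξ y) := by ring
  have hmapeq : Measure.map (fun ω => walkPos ξ (G ω) ω - runMax ξ (G ω) ω) μ
      = Measure.map (fun ω => runMin ξ (G ω) ω) μ := by
    apply MeasureTheory.Measure.ext_of_singleton
    intro y
    rw [Measure.map_apply hYm (measurableSet_singleton _),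
      Measure.map_apply hMm (measurableSet_singleton _)]
    exact hYMn y
  refine ⟨hIndep, hmapeq, ?_⟩
  intro w hw
  have hφ : Measurable (fun z : ℤ => ENNReal.ofReal (w ^ z)) := measurable_of_countable _
  have hsplit : ∀ ω : Ω, ENNReal.ofReal (w ^ walkPos ξ (G ω) ω)
      = ENNReal.ofReal (w ^ runMax ξ (G ω) ω)
        * ENNReal.ofReal (w ^ (walkPos ξ (G ω) ω - runMax ξ (G ω) ω)) := by
    intro ω
    rw [← ENNReal.ofReal_mul (le_of_lt (zpow_pos hw _))]
    congr 1
    rw [← zpow_add₀ (ne_of_gt hw)]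
    congr 1
    ring
  calc ∫⁻ ω, ENNReal.ofReal (w ^ walkPos ξ (G ω) ω) ∂μ
      = ∫⁻ ω, ((fun z : ℤ => ENNReal.ofReal (w ^ z)) ∘ (fun ω => runMax ξ (G ω) ω)
          * (fun z : ℤ => ENNReal.ofReal (w ^ z))
            ∘ (fun ω => walkPos ξ (G ω) ω - runMax ξ (G ω) ω)) ω ∂μ :=
        lintegral_congr hsplit
    _ = (∫⁻ ω, ENNReal.ofReal (w ^ runMax ξ (G ω) ω) ∂μ)
          * ∫⁻ ω, ENNReal.ofReal (w ^ (walkPos ξ (G ω) ω - runMax ξ (G ω) ω)) ∂μ :=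
        ProbabilityTheory.lintegral_mul_eq_lintegral_mul_lintegral_of_indepFun
          (hφ.comp hXm) (hφ.comp hYm) (hIndep.comp hφ hφ)
    _ = (∫⁻ ω, ENNReal.ofReal (w ^ runMax ξ (G ω) ω) ∂μ)
          * ∫⁻ ω, ENNReal.ofReal (w ^ runMin ξ (G ω) ω) ∂μ := by
        congr 1
        rw [← lintegral_map hφ hYm, ← lintegral_map hφ hMm, hmapeq]
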